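/- Let M be an l×l symmetric positive definite real matrix with eigenvalues λ₁ ≥ λ₂ ≥ ... ≥ λ_l > 0, and let A, B, E, F be m×l real matrices with AᵀA = BᵀB = EᵀE = FᵀF = I_l. Then (λ_l/2)‖ABᵀ − EFᵀ‖_F² ≤ ⟨AMBᵀ, ABᵀ − EFᵀ⟩ ≤ (λ₁/2)‖ABᵀ − EFᵀ‖_F², where ⟨X, Y⟩ = tr(XYᵀ) is the trace inner product on matrices. -/

import Mathlib

open Matrix

/-- Frobenius norm of a real matrix: `‖M‖_F = (tr (M Mᵀ))^{1/2}`. -/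
noncomputable def frobNorm {m n : Type*} [Fintype m] [Fintype n]
    (M : Matrix m n ℝ) : ℝ :=
  Real.sqrt (Matrix.trace (M * Mᵀ))

/-- Trace inner product on matrices: `⟨X, Y⟩ = tr (X Yᵀ)`. -/
noncomputable def traceInner {m n : Type*} [Fintype m] [Fintype n]
    (X Y : Matrix m n ℝ) : ℝ :=
  Matrix.trace (X * Yᵀ)

lemma psd_trace_nonneg {n : Type*} [Fintype n] [DecidableEq n] {X : Matrix n n ℝ}
    (hX : X.PosSemidef) : 0 ≤ X.trace := by
  refine Finset.sum_nonneg fun i _ => ?_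
  exact hX.diag_nonneg

lemma trace_smul_psd {k l : Type*} [Fintype k] [Fintype l] [DecidableEq k] [DecidableEq l]
    {X : Matrix l l ℝ} (hX : X.PosSemidef) (C : Matrix k l ℝ) :
    0 ≤ Matrix.trace (X * (Cᵀ * C)) := by
  have h1 : (C * X * Cᵀ).PosSemidef := by
    have := hX.mul_mul_conjTranspose_same C
    rwa [conjTranspose_eq_transpose_of_trivial] at this
  have h2 := psd_trace_nonneg h1
  rwa [Matrix.trace_mul_cycle, Matrix.trace_mul_comm, ← Matrix.mul_assoc,
    Matrix.mul_assoc] at h2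

lemma smul_one_sub_posSemidef {n : Type*} [Fintype n] [DecidableEq n]
    {M : Matrix n n ℝ} (hM : M.IsHermitian) {c : ℝ}
    (h : ∀ i, hM.eigenvalues i ≤ c) :
    (c • (1 : Matrix n n ℝ) - M).PosSemidef := by
  set U : Matrix n n ℝ := (hM.eigenvectorUnitary : Matrix n n ℝ) with hUdef
  have hU : U * star U = 1 := (Matrix.mem_unitaryGroup_iff).mp hM.eigenvectorUnitary.2
  have key : c • (1 : Matrix n n ℝ) - M
      = U * (diagonal (fun i => c - hM.eigenvalues i)) * star U := by
    conv_lhs => rw [hM.spectral_theorem]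
    rw [RCLike.ofReal_real_eq_id, Unitary.conjStarAlgAut_apply, ← hUdef]
    have h1 : c • (1 : Matrix n n ℝ) = U * (c • (1 : Matrix n n ℝ)) * star U := by
      rw [Matrix.mul_smul, Matrix.mul_one, Matrix.smul_mul, hU]
    rw [h1, ← Matrix.sub_mul, ← Matrix.mul_sub]
    congr 2
    rw [smul_one_eq_diagonal, diagonal_sub]
    rfl
  rw [key]
  have hd : (diagonal (fun i => c - hM.eigenvalues i)).PosSemidef :=
    Matrix.posSemidef_diagonal_iff.mpr fun i => by linarith [h i]
  have := hd.mul_mul_conjTranspose_same U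
  rwa [star_eq_conjTranspose] at key ⊢

lemma sub_smul_one_posSemidef {n : Type*} [Fintype n] [DecidableEq n]
    {M : Matrix n n ℝ} (hM : M.IsHermitian) {c : ℝ}
    (h : ∀ i, c ≤ hM.eigenvalues i) :
    (M - c • (1 : Matrix n n ℝ)).PosSemidef := by
  set U : Matrix n n ℝ := (hM.eigenvectorUnitary : Matrix n n ℝ) with hUdef
  have hU : U * star U = 1 := (Matrix.mem_unitaryGroup_iff).mp hM.eigenvectorUnitary.2
  have key : M - c • (1 : Matrix n n ℝ)
      = U * (diagonal (fun i => hM.eigenvalues i - c)) * star U := by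
    conv_lhs => rw [hM.spectral_theorem]
    rw [RCLike.ofReal_real_eq_id, Unitary.conjStarAlgAut_apply, ← hUdef]
    have h1 : c • (1 : Matrix n n ℝ) = U * (c • (1 : Matrix n n ℝ)) * star U := by
      rw [Matrix.mul_smul, Matrix.mul_one, Matrix.smul_mul, hU]
    rw [h1, ← Matrix.sub_mul, ← Matrix.mul_sub]
    congr 2
    rw [smul_one_eq_diagonal, diagonal_sub]
    rfl
  rw [key]
  have hd : (diagonal (fun i => hM.eigenvalues i - c)).PosSemidef :=
    Matrix.posSemidef_diagonal_iff.mpr fun i => by linarith [h i]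
  have := hd.mul_mul_conjTranspose_same U
  rwa [star_eq_conjTranspose] at key ⊢

/-- Let `M` be a symmetric positive definite `l×l` matrix whose eigenvalues
all lie in `[λ_l, λ₁]` with `λ_l > 0`, and let `A, B, E, F` be `m×l` matrices with
orthonormal columns. Then
`(λ_l/2)‖ABᵀ − EFᵀ‖_F² ≤ ⟨AMBᵀ, ABᵀ − EFᵀ⟩ ≤ (λ₁/2)‖ABᵀ − EFᵀ‖_F²`. -/
theorem traceInner_bounds (l m : ℕ)
    (M : Matrix (Fin l) (Fin l) ℝ) (hM : M.IsHermitian) (hMpd : M.PosDef)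
    (lam1 laml : ℝ) (hlaml : 0 < laml)
    (heig : ∀ i, laml ≤ hM.eigenvalues i ∧ hM.eigenvalues i ≤ lam1)
    (A B E F : Matrix (Fin m) (Fin l) ℝ)
    (hA : Aᵀ * A = 1) (hB : Bᵀ * B = 1) (hE : Eᵀ * E = 1) (hF : Fᵀ * F = 1) :
    laml / 2 * frobNorm (A * Bᵀ - E * Fᵀ) ^ 2
        ≤ traceInner (A * M * Bᵀ) (A * Bᵀ - E * Fᵀ) ∧
      traceInner (A * M * Bᵀ) (A * Bᵀ - E * Fᵀ)
        ≤ lam1 / 2 * frobNorm (A * Bᵀ - E * Fᵀ) ^ 2 := by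
  have hMt : Mᵀ = M := by
    rw [← conjTranspose_eq_transpose_of_trivial]; exact hM
  have hE' : ∀ {k : Type} (X : Matrix (Fin l) k ℝ), Eᵀ * (E * X) = X := fun X => by
    rw [← Matrix.mul_assoc, hE, Matrix.one_mul]
  have hF' : ∀ {k : Type} (X : Matrix (Fin l) k ℝ), Fᵀ * (F * X) = X := fun X => by
    rw [← Matrix.mul_assoc, hF, Matrix.one_mul]
  have hA' : ∀ {k : Type} (X : Matrix (Fin l) k ℝ), Aᵀ * (A * X) = X := fun X => by
    rw [← Matrix.mul_assoc, hA, Matrix.one_mul]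
  have hB' : ∀ {k : Type} (X : Matrix (Fin l) k ℝ), Bᵀ * (B * X) = X := fun X => by
    rw [← Matrix.mul_assoc, hB, Matrix.one_mul]
  set D : Matrix (Fin m) (Fin m) ℝ := A * Bᵀ - E * Fᵀ with hD
  set G : Matrix (Fin l) (Fin l) ℝ := Aᵀ * (E * (Fᵀ * B)) with hG
  set T2 : Matrix (Fin l) (Fin l) ℝ := (2:ℝ) • (1 : Matrix (Fin l) (Fin l) ℝ) - G - Gᵀ with hT2
  have hGt : Gᵀ = Bᵀ * (F * (Eᵀ * A)) := by
    simp [hG, Matrix.mul_assoc]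
  -- (i)
  have htriv : Matrix.trace (M * Gᵀ) = Matrix.trace (M * G) := by
    rw [← Matrix.trace_transpose (M * Gᵀ), Matrix.transpose_mul, Matrix.transpose_transpose,
      hMt, Matrix.trace_mul_comm]
  set tM : ℝ := Matrix.trace M
  set s : ℝ := Matrix.trace (M * G)
  set u : ℝ := Matrix.trace G
  set tI : ℝ := Matrix.trace (1 : Matrix (Fin l) (Fin l) ℝ)
  -- (iii)
  have hinner : traceInner (A * M * Bᵀ) D = tM - s := by
    rw [traceInner, hD, transpose_sub, Matrix.mul_sub, Matrix.trace_sub]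
    congr 1
    · simp only [transpose_mul, transpose_transpose, Matrix.mul_assoc]
      rw [Matrix.trace_mul_comm]
      simp only [Matrix.mul_assoc, hA, hB, Matrix.mul_one]
      rfl
    · simp only [transpose_mul, transpose_transpose, Matrix.mul_assoc]
      rw [Matrix.trace_mul_comm]
      simp only [Matrix.mul_assoc]
      rw [← hGt, htriv]
  -- decomposition
  have hdecomp : T2 = (Eᵀ * A - Fᵀ * B)ᵀ * (Eᵀ * A - Fᵀ * B)
      + (A - E * (Eᵀ * A))ᵀ * (A - E * (Eᵀ * A))
      + (B - F * (Fᵀ * B))ᵀ * (B - F * (Fᵀ * B)) := by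
    rw [hT2, hG, hGt]
    simp only [transpose_sub, transpose_mul, transpose_transpose, Matrix.sub_mul,
      Matrix.mul_sub, Matrix.mul_assoc, hA', hB', hE', hF', hA, hB, hE, hF,
      Matrix.mul_one, two_smul]
    abel
  -- frobNorm squared
  have hDDt : (D * Dᵀ).PosSemidef := by
    have := Matrix.posSemidef_self_mul_conjTranspose D
    rwa [conjTranspose_eq_transpose_of_trivial] at this
  have hfrob : frobNorm D ^ 2 = Matrix.trace (D * Dᵀ) := by
    rw [frobNorm, Real.sq_sqrt (psd_trace_nonneg hDDt)]
  have htrD : Matrix.trace (D * Dᵀ) = 2 * tI - 2 * u := by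
    rw [hD, transpose_sub, Matrix.mul_sub, Matrix.sub_mul, Matrix.sub_mul,
      Matrix.trace_sub, Matrix.trace_sub, Matrix.trace_sub]
    have t1 : Matrix.trace (A * Bᵀ * (A * Bᵀ)ᵀ) = tI := by
      simp only [transpose_mul, transpose_transpose, Matrix.mul_assoc]
      rw [Matrix.trace_mul_comm]
      simp only [Matrix.mul_assoc, hA, hB, Matrix.mul_one]
      rfl
    have t4 : Matrix.trace (E * Fᵀ * (E * Fᵀ)ᵀ) = tI := by
      simp only [transpose_mul, transpose_transpose, Matrix.mul_assoc]
      rw [Matrix.trace_mul_comm]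
      simp only [Matrix.mul_assoc, hE, hF, Matrix.mul_one]
      rfl
    have t2 : Matrix.trace (E * Fᵀ * (A * Bᵀ)ᵀ) = u := by
      rw [transpose_mul, transpose_transpose, ← Matrix.mul_assoc,
        Matrix.trace_mul_cycle, Matrix.mul_assoc, Matrix.mul_assoc]
    have t3 : Matrix.trace (A * Bᵀ * (E * Fᵀ)ᵀ) = u := by
      simp only [transpose_mul, transpose_transpose, Matrix.mul_assoc]
      rw [Matrix.trace_mul_comm]
      simp only [Matrix.mul_assoc]
      rw [← hGt, Matrix.trace_transpose]
    rw [t1, t2, t3, t4]; ring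
  -- traces of T2
  have htrT2 : Matrix.trace T2 = 2 * tI - 2 * u := by
    rw [hT2, Matrix.trace_sub, Matrix.trace_sub, Matrix.trace_smul, Matrix.trace_transpose,
      smul_eq_mul]
    show (2:ℝ) * tI - u - u = 2 * tI - 2 * u
    ring
  have htrMT2 : Matrix.trace (M * T2) = 2 * tM - 2 * s := by
    rw [hT2, Matrix.mul_sub, Matrix.mul_sub, Matrix.trace_sub, Matrix.trace_sub,
      Matrix.mul_smul, Matrix.mul_one, Matrix.trace_smul, smul_eq_mul, htriv]
    show (2:ℝ) * tM - s - s = 2 * tM - 2 * s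
    ring
  -- positivity
  have hpsdmul : ∀ {N : Matrix (Fin l) (Fin l) ℝ}, N.PosSemidef → 0 ≤ Matrix.trace (N * T2) := by
    intro N hN
    rw [hdecomp, Matrix.mul_add, Matrix.mul_add, Matrix.trace_add, Matrix.trace_add]
    have p1 := trace_smul_psd hN (Eᵀ * A - Fᵀ * B)
    have p2 := trace_smul_psd hN (A - E * (Eᵀ * A))
    have p3 := trace_smul_psd hN (B - F * (Fᵀ * B))
    linarith
  have hup := hpsdmul (smul_one_sub_posSemidef hM (fun i => (heig i).2))
  have hlo := hpsdmul (sub_smul_one_posSemidef hM (fun i => (heig i).1))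
  rw [Matrix.sub_mul, Matrix.trace_sub, Matrix.smul_mul, Matrix.one_mul, Matrix.trace_smul,
    smul_eq_mul, htrT2, htrMT2] at hup
  rw [Matrix.sub_mul, Matrix.trace_sub, Matrix.smul_mul, Matrix.one_mul, Matrix.trace_smul,
    smul_eq_mul, htrT2, htrMT2] at hlo
  rw [hinner, hfrob, htrD]
  constructor <;> nlinarith [hup, hlo]
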